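/- Let n ≥ 2 and let 1 ≤ i < j ≤ n. The set M of pairs {(a,b) : 1 ≤ a < b ≤ n} corresponding to the strictly upper triangular positions of an n×n matrix, restricted to the nilradical determined by block sizes (r_1,…,r_u), has the property that every root (R_k, R_k+1) for 1 ≤ k ≤ u−1 (where R_k = r_1 + ⋯ + r_k) is minimal in M with respect to the relation γ' > γ iff γ' − γ is a positive root; that is, there is no ξ ∈ M with (R_k, R_k+1) > ξ. -/
import Mathlib


/-- `γ > ξ` : the difference `γ − ξ` is a positive root of `gl(n)`; for pairs this means
same first component with a smaller second component, or same second component with a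
larger first component (`γ = (i,j)`, `ξ = (a,b)`: `a = i ∧ b < j` or `b = j ∧ i < a`). -/
def rootGT (γ ξ : ℕ × ℕ) : Prop :=
  (γ.1 = ξ.1 ∧ ξ.2 < γ.2) ∨ (γ.2 = ξ.2 ∧ γ.1 < ξ.1)

/-- `R k = r_1 + ⋯ + r_k`, the partial sums of the block sizes. -/
def partialSum (r : ℕ → ℕ) (k : ℕ) : ℕ := ∑ i ∈ Finset.Icc 1 k, r i

/-- The root set `M` of the nilradical determined by block sizes `(r_1, …, r_u)`:
the pairs `(i,j)`, `1 ≤ i < j ≤ n`, such that `i` and `j` lie in different diagonal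
blocks, i.e. there is no `k` with `R_{k-1} < i ≤ j ≤ R_k`. -/
def nilradicalRoots (u : ℕ) (r : ℕ → ℕ) : Set (ℕ × ℕ) :=
  {p | 1 ≤ p.1 ∧ p.1 < p.2 ∧ p.2 ≤ partialSum r u ∧
    ¬ ∃ k, 1 ≤ k ∧ k ≤ u ∧ partialSum r (k - 1) < p.1 ∧ p.2 ≤ partialSum r k}

/-- Every root `(R_k, R_k + 1)`, `1 ≤ k ≤ u − 1`, is minimal in `M`:
there is no `ξ ∈ M` with `(R_k, R_k + 1) > ξ`. -/
theorem superdiagonal_root_minimal (u : ℕ) (r : ℕ → ℕ)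
    (hr : ∀ i, 1 ≤ i → i ≤ u → 0 < r i) (hn : 2 ≤ partialSum r u)
    (k : ℕ) (hk1 : 1 ≤ k) (hk2 : k ≤ u - 1) :
    ¬ ∃ ξ ∈ nilradicalRoots u r, rootGT (partialSum r k, partialSum r k + 1) ξ := by
  rintro ⟨ξ, ⟨h1, h2, h3, h4⟩, hgt⟩
  rcases hgt with ⟨ha, hb⟩ | ⟨hb, ha⟩ <;> simp_all <;> omega
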